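/- For 3 ≤ N ≤ 9 and any ε₀ > 0 with (N-2)²/4 + ε₀² ≤ 2(N-2), the functions f_j(r) = r^{-(N-2)/2}·sin(ε₀·(ln r)/2)·𝟙_{[r_{j+1}, r_j]}(r), with r_j = e^{-2πj/ε₀}, satisfy ∫_0^1 (|f_j'|² - ((N-2)²/4 + ε₀²)·r^{-2}·f_j²)·r^{N-1} dr = -(3/4)·ε₀²·∫_{r_{j+1}}^{r_j} r^{-2}·f_j²·r^{N-1} dr < 0, and f_j, f_k have disjoint supports for j ≠ k. -/

import Mathlib

open Real Set MeasureTheory intervalIntegral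
open scoped Interval

private lemma hasDerivAt_phi (a b r : ℝ) (hr : 0 < r) :
    HasDerivAt (fun x : ℝ => x ^ (-a) * Real.sin (b * Real.log x))
      (((-a) * Real.sin (b * Real.log r) + b * Real.cos (b * Real.log r)) * r ^ (-a - 1)) r := by
  have h1 : HasDerivAt (fun x : ℝ => x ^ (-a)) ((-a) * r ^ (-a - 1)) r :=
    Real.hasDerivAt_rpow_const (Or.inl hr.ne')
  have h2 : HasDerivAt (fun x : ℝ => b * Real.log x) (b * r⁻¹) r :=
    (Real.hasDerivAt_log hr.ne').const_mul b
  have h3 : HasDerivAt (fun x : ℝ => Real.sin (b * Real.log x))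
      (Real.cos (b * Real.log r) * (b * r⁻¹)) r := (Real.hasDerivAt_sin _).comp r h2
  have h4 := h1.mul h3
  have h5 : r ^ (-a - 1) = r ^ (-a) * r⁻¹ := by
    rw [← Real.rpow_neg_one r, ← Real.rpow_add hr]; ring_nf
  refine h4.congr_deriv ?_
  rw [h5]; ring

private lemma hasDerivAt_F (a b r : ℝ) (hr : 0 < r) :
    HasDerivAt (fun x : ℝ => (-a) * (Real.sin (b * Real.log x))^2
        - (3/2) * b^2 * Real.log x + (5*b/4) * Real.sin (2*(b * Real.log x)))
      ((((-a) * Real.sin (b * Real.log r) + b * Real.cos (b * Real.log r))^2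
        - (a^2 + 4*b^2) * (Real.sin (b * Real.log r))^2) / r) r := by
  have h2 : HasDerivAt (fun x : ℝ => b * Real.log x) (b * r⁻¹) r :=
    (Real.hasDerivAt_log hr.ne').const_mul b
  have h3 : HasDerivAt (fun x : ℝ => Real.sin (b * Real.log x))
      (Real.cos (b * Real.log r) * (b * r⁻¹)) r := (Real.hasDerivAt_sin _).comp r h2
  have h4 : HasDerivAt (fun x : ℝ => (Real.sin (b * Real.log x))^2)
      (2 * Real.sin (b * Real.log r) * (Real.cos (b * Real.log r) * (b * r⁻¹))) r := by
    have := h3.pow 2; simp at this; exact this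
  have h5 : HasDerivAt (fun x : ℝ => 2*(b * Real.log x)) (2*(b * r⁻¹)) r := h2.const_mul 2
  have h6 : HasDerivAt (fun x : ℝ => Real.sin (2*(b * Real.log x)))
      (Real.cos (2*(b * Real.log r)) * (2*(b * r⁻¹))) r := (Real.hasDerivAt_sin _).comp r h5
  have h7 := ((h4.const_mul (-a)).sub (((Real.hasDerivAt_log hr.ne').const_mul ((3:ℝ)/2 * b^2)))).add
    (h6.const_mul (5*b/4))
  refine h7.congr_deriv ?_
  symm
  rw [Real.cos_two_mul]
  have hsc := Real.sin_sq_add_cos_sq (b * Real.log r)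
  field_simp
  linear_combination (-32*b^2) * hsc

private lemma hasDerivAt_S (b r : ℝ) (hb : b ≠ 0) (hr : 0 < r) :
    HasDerivAt (fun x : ℝ => Real.log x / 2 - Real.sin (2*(b * Real.log x)) / (4*b))
      ((Real.sin (b * Real.log r))^2 / r) r := by
  have h2 : HasDerivAt (fun x : ℝ => b * Real.log x) (b * r⁻¹) r :=
    (Real.hasDerivAt_log hr.ne').const_mul b
  have h5 : HasDerivAt (fun x : ℝ => 2*(b * Real.log x)) (2*(b * r⁻¹)) r := h2.const_mul 2
  have h6 : HasDerivAt (fun x : ℝ => Real.sin (2*(b * Real.log x)))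
      (Real.cos (2*(b * Real.log r)) * (2*(b * r⁻¹))) r := (Real.hasDerivAt_sin _).comp r h5
  have h7 := ((Real.hasDerivAt_log hr.ne').div_const 2).sub (h6.div_const (4*b))
  refine h7.congr_deriv ?_
  symm
  rw [Real.cos_two_mul]
  have hsc := Real.sin_sq_add_cos_sq (b * Real.log r)
  field_simp
  linear_combination (8) * hsc

theorem morse_index_test_functions (N : ℕ) (hN3 : 3 ≤ N) (hN9 : N ≤ 9)
    (ε₀ : ℝ) (hε₀ : 0 < ε₀)
    (hsub : ((N : ℝ) - 2) ^ 2 / 4 + ε₀ ^ 2 ≤ 2 * ((N : ℝ) - 2))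
    (rj : ℕ → ℝ) (hrj : ∀ j : ℕ, rj j = exp (-2 * π * (j : ℝ) / ε₀))
    (f : ℕ → ℝ → ℝ)
    (hf : ∀ j : ℕ, ∀ r : ℝ, f j r =
      if r ∈ Icc (rj (j + 1)) (rj j) then
        r ^ (-(((N : ℝ) - 2) / 2)) * Real.sin (ε₀ * Real.log r / 2)
      else 0) :
    (∀ j : ℕ,
      (∫ r in (0 : ℝ)..1,
          ((deriv (f j) r) ^ 2 -
            ((((N : ℝ) - 2) ^ 2 / 4 + ε₀ ^ 2) / r ^ 2) * (f j r) ^ 2) * r ^ (N - 1)) =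
        -(3 / 4) * ε₀ ^ 2 *
          ∫ r in (rj (j + 1))..(rj j), ((f j r) ^ 2 / r ^ 2) * r ^ (N - 1) ∧
      (∫ r in (0 : ℝ)..1,
          ((deriv (f j) r) ^ 2 -
            ((((N : ℝ) - 2) ^ 2 / 4 + ε₀ ^ 2) / r ^ 2) * (f j r) ^ 2) * r ^ (N - 1)) < 0) ∧
    (∀ j k : ℕ, j ≠ k → ∀ r : ℝ, f j r = 0 ∨ f k r = 0) := by
  have hπ := Real.pi_pos
  set a : ℝ := ((N : ℝ) - 2) / 2 with ha
  set b : ℝ := ε₀ / 2 with hb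
  have hbne : b ≠ 0 := by positivity
  have hrpos : ∀ m : ℕ, 0 < rj m := fun m => by rw [hrj]; exact Real.exp_pos _
  have hlog : ∀ m : ℕ, Real.log (rj m) = -2 * π * m / ε₀ := fun m => by
    rw [hrj, Real.log_exp]
  have hanti : ∀ m n : ℕ, m ≤ n → rj n ≤ rj m := by
    intro m n h
    rw [hrj, hrj]
    apply Real.exp_le_exp.2
    have hc : (m:ℝ) ≤ n := Nat.cast_le.2 h
    rw [div_le_div_iff₀ hε₀ hε₀]
    nlinarith [mul_le_mul_of_nonneg_left hc (mul_pos hπ hε₀).le]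
  have hB1 : ∀ m : ℕ, rj m ≤ 1 := by
    intro m
    have := hanti 0 m (Nat.zero_le m)
    calc rj m ≤ rj 0 := this
      _ = 1 := by rw [hrj]; norm_num
  have harg : ∀ x : ℝ, ε₀ * Real.log x / 2 = b * Real.log x := fun x => by rw [hb]; ring
  have hsinend : ∀ m : ℕ, Real.sin (b * Real.log (rj m)) = 0 := by
    intro m
    have h : b * Real.log (rj m) = ((-(m : ℤ) : ℤ) : ℝ) * π := by
      rw [hlog, hb]; push_cast; field_simp
    rw [h]; exact Real.sin_int_mul_pi _
  have hsinend2 : ∀ m : ℕ, Real.sin (2*(b * Real.log (rj m))) = 0 := by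
    intro m
    have h : 2*(b * Real.log (rj m)) = ((-(2*m : ℤ) : ℤ) : ℝ) * π := by
      rw [hlog, hb]; push_cast; field_simp
    rw [h]; exact Real.sin_int_mul_pi _
  have hfIcc : ∀ j : ℕ, ∀ r : ℝ, r ∈ Icc (rj (j+1)) (rj j) →
      f j r = r ^ (-a) * Real.sin (b * Real.log r) := by
    intro j r hr
    rw [hf j r, if_pos hr, harg]
  have hfout : ∀ j : ℕ, ∀ r : ℝ, r ∉ Icc (rj (j+1)) (rj j) → f j r = 0 := by
    intro j r hr
    rw [hf j r, if_neg hr]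
  have hfend : ∀ j m : ℕ, ∀ r : ℝ, r = rj m → f j r = 0 := by
    intro j m r hr
    rw [hf j r]
    split
    · rw [harg, hr, hsinend, mul_zero]
    · rfl
  constructor
  · intro j
    have hApos : 0 < rj (j + 1) := hrpos _
    have hBpos : 0 < rj j := hrpos _
    have hAB : rj (j + 1) ≤ rj j := hanti j (j + 1) (Nat.le_succ j)
    have hcast : ((N - 1 : ℕ) : ℝ) = (N : ℝ) - 1 := by
      have h1 : 1 ≤ N := by omega
      push_cast [h1]
      ring
    have hp1 : ∀ r : ℝ, 0 < r → (r ^ (-a - 1)) ^ 2 * r ^ (N - 1) = 1 / r := by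
      intro r hr
      rw [← Real.rpow_natCast (r ^ (-a - 1)) 2, ← Real.rpow_natCast r (N - 1),
        ← Real.rpow_mul hr.le, ← Real.rpow_add hr, hcast]
      rw [show (-a - 1) * ((2 : ℕ) : ℝ) + ((N : ℝ) - 1) = -1 by rw [ha]; push_cast; ring]
      rw [Real.rpow_neg_one, one_div]
    have hp2 : ∀ r : ℝ, 0 < r → (r ^ (-a)) ^ 2 * r ^ (N - 1) = r := by
      intro r hr
      rw [← Real.rpow_natCast (r ^ (-a)) 2, ← Real.rpow_natCast r (N - 1),
        ← Real.rpow_mul hr.le, ← Real.rpow_add hr, hcast]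
      rw [show (-a) * ((2 : ℕ) : ℝ) + ((N : ℝ) - 1) = 1 by rw [ha]; push_cast; ring]
      exact Real.rpow_one r
    have hK : ((N : ℝ) - 2) ^ 2 / 4 + ε₀ ^ 2 = a ^ 2 + 4 * b ^ 2 := by
      rw [ha, hb]; ring
    -- derivative facts
    have hd0 : ∀ r : ℝ, r < rj (j + 1) → deriv (f j) r = 0 := by
      intro r hr
      have hev : f j =ᶠ[nhds r] fun _ => (0 : ℝ) := by
        filter_upwards [Iio_mem_nhds hr] with x hx
        exact hfout j x fun hmem => absurd hmem.1 (not_le.2 hx)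
      rw [hev.deriv_eq]
      exact deriv_const r (0 : ℝ)
    have hd1 : ∀ r : ℝ, rj j < r → deriv (f j) r = 0 := by
      intro r hr
      have hev : f j =ᶠ[nhds r] fun _ => (0 : ℝ) := by
        filter_upwards [Ioi_mem_nhds hr] with x hx
        exact hfout j x fun hmem => absurd hmem.2 (not_le.2 hx)
      rw [hev.deriv_eq]
      exact deriv_const r (0 : ℝ)
    have hdmid : ∀ r ∈ Ioo (rj (j + 1)) (rj j), deriv (f j) r =
        ((-a) * Real.sin (b * Real.log r) + b * Real.cos (b * Real.log r)) * r ^ (-a - 1) := by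
      intro r hr
      have hev : f j =ᶠ[nhds r] fun x => x ^ (-a) * Real.sin (b * Real.log x) := by
        filter_upwards [Ioo_mem_nhds hr.1 hr.2] with x hx
        exact hfIcc j x ⟨hx.1.le, hx.2.le⟩
      rw [hev.deriv_eq]
      exact (hasDerivAt_phi a b r (hApos.trans hr.1)).deriv
    have haeA : ∀ᵐ x : ℝ, x ≠ rj (j + 1) := by
      rw [MeasureTheory.ae_iff]
      simp only [ne_eq, not_not, Set.setOf_eq_eq_singleton]
      exact Real.volume_singleton
    have haeB : ∀ᵐ x : ℝ, x ≠ rj j := by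
      rw [MeasureTheory.ae_iff]
      simp only [ne_eq, not_not, Set.setOf_eq_eq_singleton]
      exact Real.volume_singleton
    -- continuity facts
    have hne0 : ∀ x ∈ uIcc (rj (j + 1)) (rj j), x ≠ 0 := by
      intro x hx
      rw [uIcc_of_le hAB] at hx
      exact (hApos.trans_le hx.1).ne'
    have hlogc : ContinuousOn Real.log (uIcc (rj (j + 1)) (rj j)) :=
      Real.continuousOn_log.mono fun x hx => by simpa using hne0 x hx
    have hsc : ContinuousOn (fun r : ℝ => Real.sin (b * Real.log r))
        (uIcc (rj (j + 1)) (rj j)) :=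
      Real.continuous_sin.comp_continuousOn (continuousOn_const.mul hlogc)
    have hcc : ContinuousOn (fun r : ℝ => Real.cos (b * Real.log r))
        (uIcc (rj (j + 1)) (rj j)) :=
      Real.continuous_cos.comp_continuousOn (continuousOn_const.mul hlogc)
    -- the main integral
    have key : (∫ r in (0 : ℝ)..1,
          ((deriv (f j) r) ^ 2 -
            ((((N : ℝ) - 2) ^ 2 / 4 + ε₀ ^ 2) / r ^ 2) * (f j r) ^ 2) * r ^ (N - 1)) =
        -(3 / 4) * ε₀ * π := by
      set G : ℝ → ℝ := fun r => ((deriv (f j) r) ^ 2 -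
        ((((N : ℝ) - 2) ^ 2 / 4 + ε₀ ^ 2) / r ^ 2) * (f j r) ^ 2) * r ^ (N - 1) with hG
      set E1 : ℝ → ℝ := fun r =>
        (((-a) * Real.sin (b * Real.log r) + b * Real.cos (b * Real.log r)) ^ 2
          - (a ^ 2 + 4 * b ^ 2) * (Real.sin (b * Real.log r)) ^ 2) / r with hE1
      have hmid1 : ∀ᵐ x : ℝ, x ∈ Ι (rj (j + 1)) (rj j) → G x = E1 x := by
        filter_upwards [haeB] with x hxB hx
        rw [Set.uIoc_of_le hAB] at hx
        have hxo : x ∈ Ioo (rj (j + 1)) (rj j) := ⟨hx.1, lt_of_le_of_ne hx.2 hxB⟩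
        have hxpos : 0 < x := hApos.trans hxo.1
        rw [hG, hE1]
        simp only
        rw [hdmid x hxo, hfIcc j x ⟨hxo.1.le, hxo.2.le⟩, hK]
        have hx1 : x * x⁻¹ = 1 := mul_inv_cancel₀ hxpos.ne'
        linear_combination (((-a) * Real.sin (b * Real.log x) + b * Real.cos (b * Real.log x)) ^ 2)
            * (hp1 x hxpos)
          - ((a ^ 2 + 4 * b ^ 2) * (Real.sin (b * Real.log x)) ^ 2 / x ^ 2) * (hp2 x hxpos)
          + ((Real.sin (b * Real.log x)) ^ 2 * x⁻¹
              * ((N : ℝ) - (N : ℝ) ^ 2 / 4 - ε₀ ^ 2 - 1)) * hx1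
      have hcontE : ContinuousOn E1 (uIcc (rj (j + 1)) (rj j)) :=
        ((((continuousOn_const.mul hsc).add (continuousOn_const.mul hcc)).pow 2).sub
          (continuousOn_const.mul (hsc.pow 2))).div continuousOn_id hne0
      have hintE : IntervalIntegrable E1 volume (rj (j + 1)) (rj j) :=
        hcontE.intervalIntegrable
      have higmid : IntervalIntegrable G volume (rj (j + 1)) (rj j) := by
        rw [intervalIntegrable_iff] at hintE ⊢
        have hGE : G =ᵐ[volume.restrict (Ι (rj (j + 1)) (rj j))] E1 :=
          (ae_restrict_iff' measurableSet_uIoc).2 hmid1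
        exact hintE.congr hGE.symm
      have hlo : ∀ᵐ x : ℝ, x ∈ Ι (0 : ℝ) (rj (j + 1)) → G x = 0 := by
        filter_upwards [haeA] with x hxA hx
        rw [Set.uIoc_of_le hApos.le] at hx
        have hxlt : x < rj (j + 1) := lt_of_le_of_ne hx.2 hxA
        rw [hG]
        simp only
        rw [hd0 x hxlt, hfout j x fun hmem => absurd hmem.1 (not_le.2 hxlt)]
        ring
      have hhi : ∀ᵐ x : ℝ, x ∈ Ι (rj j) (1 : ℝ) → G x = 0 := by
        refine Filter.Eventually.of_forall fun x hx => ?_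
        rw [Set.uIoc_of_le (hB1 j)] at hx
        rw [hG]
        simp only
        rw [hd1 x hx.1, hfout j x fun hmem => absurd hmem.2 (not_le.2 hx.1)]
        ring
      have higlo : IntervalIntegrable G volume 0 (rj (j + 1)) := by
        rw [intervalIntegrable_iff]
        have hGE : G =ᵐ[volume.restrict (Ι (0 : ℝ) (rj (j + 1)))] (fun _ => (0 : ℝ)) :=
          (ae_restrict_iff' measurableSet_uIoc).2 hlo
        exact (integrable_zero _ _ _).congr hGE.symm
      have highi : IntervalIntegrable G volume (rj j) 1 := by
        rw [intervalIntegrable_iff]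
        have hGE : G =ᵐ[volume.restrict (Ι (rj j) (1 : ℝ))] (fun _ => (0 : ℝ)) :=
          (ae_restrict_iff' measurableSet_uIoc).2 hhi
        exact (integrable_zero _ _ _).congr hGE.symm
      have hintlo : ∫ x in (0 : ℝ)..(rj (j + 1)), G x = 0 := by
        rw [intervalIntegral.integral_congr_ae hlo]
        simp
      have hinthi : ∫ x in (rj j)..(1 : ℝ), G x = 0 := by
        rw [intervalIntegral.integral_congr_ae hhi]
        simp
      have hFend : ∀ m : ℕ, (-a) * (Real.sin (b * Real.log (rj m))) ^ 2
          - (3 / 2) * b ^ 2 * Real.log (rj m)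
          + (5 * b / 4) * Real.sin (2 * (b * Real.log (rj m))) = (3 / 4) * ε₀ * π * m := by
        intro m
        rw [hsinend, hsinend2, hlog, hb]
        field_simp
        ring
      have hFval : ∫ x in (rj (j + 1))..(rj j), E1 x = -(3 / 4) * ε₀ * π := by
        rw [intervalIntegral.integral_eq_sub_of_hasDerivAt
          (f := fun x : ℝ => (-a) * (Real.sin (b * Real.log x)) ^ 2
            - (3 / 2) * b ^ 2 * Real.log x + (5 * b / 4) * Real.sin (2 * (b * Real.log x)))
          (fun t ht => by
            rw [uIcc_of_le hAB] at ht
            exact hasDerivAt_F a b t (hApos.trans_le ht.1)) hintE]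
        simp only [hFend]
        push_cast
        ring
      have hmev : ∫ x in (rj (j + 1))..(rj j), G x = ∫ x in (rj (j + 1))..(rj j), E1 x :=
        intervalIntegral.integral_congr_ae hmid1
      rw [← intervalIntegral.integral_add_adjacent_intervals (higlo.trans higmid) highi,
        ← intervalIntegral.integral_add_adjacent_intervals higlo higmid,
        hintlo, hinthi, hmev, hFval]
      ring
    -- the right-hand side integral
    have key2 : (∫ r in (rj (j + 1))..(rj j), ((f j r) ^ 2 / r ^ 2) * r ^ (N - 1)) = π / ε₀ := by
      have hRHSeq : (∫ r in (rj (j + 1))..(rj j), ((f j r) ^ 2 / r ^ 2) * r ^ (N - 1)) =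
          ∫ r in (rj (j + 1))..(rj j), (Real.sin (b * Real.log r)) ^ 2 / r := by
        apply intervalIntegral.integral_congr
        intro x hx
        rw [uIcc_of_le hAB] at hx
        have hxpos : 0 < x := hApos.trans_le hx.1
        show f j x ^ 2 / x ^ 2 * x ^ (N - 1) = Real.sin (b * Real.log x) ^ 2 / x
        rw [hfIcc j x hx]
        have hx1 : x * x⁻¹ = 1 := mul_inv_cancel₀ hxpos.ne'
        linear_combination ((Real.sin (b * Real.log x)) ^ 2 / x ^ 2) * (hp2 x hxpos)
          + ((Real.sin (b * Real.log x)) ^ 2 * x⁻¹) * hx1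
      have hintE2 : IntervalIntegrable (fun r : ℝ => (Real.sin (b * Real.log r)) ^ 2 / r)
          volume (rj (j + 1)) (rj j) :=
        ((hsc.pow 2).div continuousOn_id hne0).intervalIntegrable
      rw [hRHSeq, intervalIntegral.integral_eq_sub_of_hasDerivAt
        (f := fun x : ℝ => Real.log x / 2 - Real.sin (2 * (b * Real.log x)) / (4 * b))
        (fun t ht => by
          rw [uIcc_of_le hAB] at ht
          exact hasDerivAt_S b t hbne (hApos.trans_le ht.1)) hintE2]
      simp only [hsinend2]
      simp only [hlog]
      push_cast
      field_simp
      ring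
    constructor
    · rw [key, key2]
      field_simp
    · rw [key]
      nlinarith
  · -- disjoint supports
    intro j k hjk r
    by_contra hcon
    push_neg at hcon
    obtain ⟨h1, h2⟩ := hcon
    have hmem1 : r ∈ Icc (rj (j+1)) (rj j) := by
      by_contra h; exact h1 (hfout j r h)
    have hmem2 : r ∈ Icc (rj (k+1)) (rj k) := by
      by_contra h; exact h2 (hfout k r h)
    have hne : ∀ m : ℕ, r ≠ rj m := fun m hm => h1 (hfend j m r hm)
    rcases lt_or_gt_of_ne hjk with h | h
    · have : rj k ≤ rj (j+1) := hanti (j+1) k h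
      exact absurd ((lt_of_le_of_ne hmem2.2 (hne k)).trans_le (this.trans hmem1.1))
        (lt_irrefl r)
    · have : rj j ≤ rj (k+1) := hanti (k+1) j h
      exact absurd ((lt_of_le_of_ne hmem1.2 (hne j)).trans_le (this.trans hmem2.1))
        (lt_irrefl r)
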